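/- arXiv:1508.07633 — 5 statements merged into one kernel-verified Lean document; each statement's English description precedes it below -/
import Mathlib

section
/- Let A, B be n×n complex matrices and let C = A + B. Then the number of distinct eigenvalues of C satisfies |Λ(C)| ≤ (rank(B) + 1)·|Λ(A)| + d(A). -/
open Matrix Polynomial Module

/-- The set of distinct eigenvalues of a matrix: the roots of its characteristic polynomial. -/
noncomputable def eigSet {n : ℕ} (M : Matrix (Fin n) (Fin n) ℂ) : Finset ℂ :=
  M.charpoly.roots.toFinset

/-- Algebraic multiplicity of `μ` as an eigenvalue of `M` (multiplicity as a root of the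
characteristic polynomial; `0` if `μ` is not an eigenvalue). -/
noncomputable def algMult {n : ℕ} (M : Matrix (Fin n) (Fin n) ℂ) (μ : ℂ) : ℕ :=
  M.charpoly.rootMultiplicity μ

/-- Geometric multiplicity of `μ` as an eigenvalue of `M`: the dimension of `ker (M - μ I)`. -/
noncomputable def geomMult {n : ℕ} (M : Matrix (Fin n) (Fin n) ℂ) (μ : ℂ) : ℕ :=
  Module.finrank ℂ (LinearMap.ker (M - μ • (1 : Matrix (Fin n) (Fin n) ℂ)).mulVecLin)

/-- The defectivity of a matrix: the sum over its distinct eigenvalues of the differences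
between algebraic and geometric multiplicities. -/
noncomputable def defect {n : ℕ} (M : Matrix (Fin n) (Fin n) ℂ) : ℕ :=
  ∑ μ ∈ eigSet M, (algMult M μ - geomMult M μ)

/-- A matrix is diagonalizable if it is similar to a diagonal matrix. -/
def IsDiagonalizable {n : ℕ} (M : Matrix (Fin n) (Fin n) ℂ) : Prop :=
  ∃ P D : Matrix (Fin n) (Fin n) ℂ, IsUnit P ∧ D.IsDiag ∧ M = P * D * P⁻¹

/-! ### Auxiliary development -/

section Aux

variable {n : ℕ}

/-- `matP l M = ∏_{μ ∈ l} (M - μ I)`. -/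
noncomputable def matP (l : List ℂ) (M : Matrix (Fin n) (Fin n) ℂ) :
    Matrix (Fin n) (Fin n) ℂ :=
  (l.map (fun μ => M - μ • (1 : Matrix (Fin n) (Fin n) ℂ))).prod

@[simp] lemma matP_nil (M : Matrix (Fin n) (Fin n) ℂ) : matP [] M = 1 := by
  simp [matP]

lemma matP_cons (μ : ℂ) (l : List ℂ) (M : Matrix (Fin n) (Fin n) ℂ) :
    matP (μ :: l) M = (M - μ • 1) * matP l M := by
  simp [matP]

/-- Subadditivity of matrix rank. -/
lemma matrank_add_le (X Y : Matrix (Fin n) (Fin n) ℂ) :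
    (X + Y).rank ≤ X.rank + Y.rank := by
  classical
  rw [Matrix.rank, Matrix.rank, Matrix.rank, Matrix.mulVecLin_add]
  have h : LinearMap.range (X.mulVecLin + Y.mulVecLin) ≤
      LinearMap.range X.mulVecLin ⊔ LinearMap.range Y.mulVecLin := by
    rintro - ⟨v, rfl⟩
    exact Submodule.mem_sup.2 ⟨_, ⟨v, rfl⟩, _, ⟨v, rfl⟩, rfl⟩
  exact (Submodule.finrank_mono h).trans
    (Submodule.finrank_add_le_finrank_add_finrank _ _)

/-- The rank of `p(A+B) - p(A)` is at most `deg p · rank B`. -/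
lemma rank_matP_sub (l : List ℂ) (A B : Matrix (Fin n) (Fin n) ℂ) :
    (matP l (A + B) - matP l A).rank ≤ l.length * B.rank := by
  induction l with
  | nil => simp
  | cons μ l ih =>
    have key : matP (μ :: l) (A + B) - matP (μ :: l) A
        = (A - μ • 1) * (matP l (A + B) - matP l A) + B * matP l (A + B) := by
      rw [matP_cons, matP_cons]
      noncomm_ring
    rw [key]
    calc ((A - μ • 1) * (matP l (A + B) - matP l A) + B * matP l (A + B)).rank
        ≤ ((A - μ • 1) * (matP l (A + B) - matP l A)).rank
            + (B * matP l (A + B)).rank := matrank_add_le _ _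
      _ ≤ (matP l (A + B) - matP l A).rank + B.rank :=
          Nat.add_le_add (Matrix.rank_mul_le_right _ _) (Matrix.rank_mul_le_left _ _)
      _ ≤ l.length * B.rank + B.rank := Nat.add_le_add_right ih _
      _ = (μ :: l).length * B.rank := by
          simp [List.length_cons, Nat.succ_mul]

/-- Action of `matP l M` on an eigenvector of `M`. -/
lemma matP_mulVec_eig (l : List ℂ) (M : Matrix (Fin n) (Fin n) ℂ) {lam : ℂ}
    {v : Fin n → ℂ} (hv : M.mulVec v = lam • v) :
    (matP l M).mulVec v = (l.map (fun μ => lam - μ)).prod • v := by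
  induction l with
  | nil => simp
  | cons μ l ih =>
    rw [matP_cons, ← Matrix.mulVec_mulVec, ih, Matrix.mulVec_smul,
      Matrix.sub_mulVec, Matrix.smul_mulVec, Matrix.one_mulVec, hv]
    rw [List.map_cons, List.prod_cons]
    rw [smul_sub, smul_smul, smul_smul, ← sub_smul]
    congr 1
    ring

/-- Each factor commutes with the product. -/
lemma matP_commute (l : List ℂ) (M : Matrix (Fin n) (Fin n) ℂ) (μ : ℂ) :
    Commute (M - μ • 1) (matP l M) := by
  induction l with
  | nil => simp only [matP_nil] at *; exact Commute.one_right _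
  | cons ν l ih =>
    rw [matP_cons]
    refine Commute.mul_right ?_ ih
    have c2 : Commute M ((ν : ℂ) • (1 : Matrix (Fin n) (Fin n) ℂ)) :=
      (Commute.one_right M).smul_right ν
    have c3 : Commute ((μ : ℂ) • (1 : Matrix (Fin n) (Fin n) ℂ)) M :=
      (Commute.one_left M).smul_left μ
    have c4 : Commute ((μ : ℂ) • (1 : Matrix (Fin n) (Fin n) ℂ))
        ((ν : ℂ) • (1 : Matrix (Fin n) (Fin n) ℂ)) :=
      ((Commute.one_left (1 : Matrix (Fin n) (Fin n) ℂ)).smul_left μ).smul_right ν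
    exact ((Commute.refl M).sub_right c2).sub_left (c3.sub_right c4)

/-- Eigenvectors of `M` for eigenvalue `μ ∈ l` lie in the kernel of `matP l M`. -/
lemma matP_mulVec_zero {l : List ℂ} {μ : ℂ} (hμ : μ ∈ l) (M : Matrix (Fin n) (Fin n) ℂ)
    {v : Fin n → ℂ} (hv : (M - μ • 1).mulVec v = 0) :
    (matP l M).mulVec v = 0 := by
  induction l with
  | nil => simp at hμ
  | cons ν l ih =>
    rcases List.mem_cons.1 hμ with h | h
    · subst h
      rw [matP_cons, (matP_commute l M μ).eq, ← Matrix.mulVec_mulVec, hv,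
        Matrix.mulVec_zero]
    · rw [matP_cons, ← Matrix.mulVec_mulVec, ih h, Matrix.mulVec_zero]

/-- Sum of dimensions of an independent family of submodules contained in `K` is at most
the dimension of `K`. -/
lemma sum_finrank_le_of_independent {ι : Type*} [Fintype ι] {V : Type*} [AddCommGroup V]
    [Module ℂ V] [FiniteDimensional ℂ V] {p : ι → Submodule ℂ V} (hp : iSupIndep p)
    {K : Submodule ℂ V} (hK : ∀ i, p i ≤ K) :
    ∑ i, Module.finrank ℂ (p i) ≤ Module.finrank ℂ K := by
  classical
  have hinj := hp.dfinsupp_lsum_injective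
  have h1 : ∑ i, Module.finrank ℂ (p i) = Module.finrank ℂ (Π₀ i, ↥(p i)) :=
    (Module.finrank_directSum _ _).symm
  have h2 := LinearMap.finrank_range_of_inj hinj
  have h3 := (Submodule.iSup_eq_range_dfinsupp_lsum p).symm
  rw [h1, ← h2, h3]
  exact Submodule.finrank_mono (iSup_le hK)

/-- The sum of algebraic multiplicities over distinct eigenvalues is `n`. -/
lemma sum_algMult (A : Matrix (Fin n) (Fin n) ℂ) :
    ∑ μ ∈ eigSet A, algMult A μ = n := by
  classical
  calc ∑ μ ∈ eigSet A, algMult A μ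
      = ∑ μ ∈ A.charpoly.roots.toFinset, A.charpoly.roots.count μ := by
        refine Finset.sum_congr rfl fun μ _ => ?_
        rw [algMult, Polynomial.count_roots]
    _ = Multiset.card A.charpoly.roots := Multiset.toFinset_sum_count_eq _
    _ = A.charpoly.natDegree :=
        (Polynomial.splits_iff_card_roots).1 (IsAlgClosed.splits _)
    _ = n := by rw [A.charpoly_natDegree_eq_dim, Fintype.card_fin]

/-- Identification of the kernel of `(A - μI)` with the eigenspace of `mulVecLin A`. -/
lemma ker_eq_eigenspace (A : Matrix (Fin n) (Fin n) ℂ) (μ : ℂ) :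
    LinearMap.ker (A - μ • (1 : Matrix (Fin n) (Fin n) ℂ)).mulVecLin
      = Module.End.eigenspace A.mulVecLin μ := by
  ext v
  rw [LinearMap.mem_ker, Module.End.mem_eigenspace_iff]
  simp only [Matrix.mulVecLin_apply, Matrix.sub_mulVec, Matrix.smul_mulVec,
    Matrix.one_mulVec, sub_eq_zero]

/-- Sum of geometric multiplicities is at most the kernel dimension of `p(A)`. -/
lemma sum_geomMult_le (A : Matrix (Fin n) (Fin n) ℂ) :
    ∑ μ ∈ eigSet A, geomMult A μ
      ≤ Module.finrank ℂ (LinearMap.ker (matP (eigSet A).toList A).mulVecLin) := by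
  classical
  have hker : ∀ μ ∈ eigSet A,
      LinearMap.ker (A - μ • (1 : Matrix (Fin n) (Fin n) ℂ)).mulVecLin
        ≤ LinearMap.ker (matP (eigSet A).toList A).mulVecLin := by
    intro μ hμ v hv
    rw [LinearMap.mem_ker, Matrix.mulVecLin_apply] at hv ⊢
    exact matP_mulVec_zero ((Finset.mem_toList).2 hμ) A hv
  have hind : iSupIndep (fun μ : ↥(eigSet A) =>
      LinearMap.ker (A - (μ : ℂ) • (1 : Matrix (Fin n) (Fin n) ℂ)).mulVecLin) := by
    simp only [ker_eq_eigenspace]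
    exact (Module.End.eigenspaces_iSupIndep A.mulVecLin).comp Subtype.coe_injective
  have key := sum_finrank_le_of_independent hind (fun μ => hker μ μ.2)
  rw [← Finset.sum_coe_sort (eigSet A) (fun μ => geomMult A μ)]
  exact key

/-- The rank of `p(A)` is at most the defectivity of `A`. -/
lemma rank_matP_le_defect (A : Matrix (Fin n) (Fin n) ℂ) :
    (matP (eigSet A).toList A).rank ≤ defect A := by
  classical
  have hrn : (matP (eigSet A).toList A).rank
      + Module.finrank ℂ (LinearMap.ker (matP (eigSet A).toList A).mulVecLin) = n := by
    have h := LinearMap.finrank_range_add_finrank_ker (matP (eigSet A).toList A).mulVecLin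
    rw [Matrix.rank]
    rw [h]
    simp [Module.finrank_pi]
  have h1 := sum_geomMult_le A
  have h2 := sum_algMult A
  have h3 : ∑ μ ∈ eigSet A, algMult A μ
      ≤ defect A + ∑ μ ∈ eigSet A, geomMult A μ := by
    rw [defect, ← Finset.sum_add_distrib]
    exact Finset.sum_le_sum fun μ _ => le_tsub_add
  have h4 : (matP (eigSet A).toList A).rank + ∑ μ ∈ eigSet A, geomMult A μ
      ≤ defect A + ∑ μ ∈ eigSet A, geomMult A μ := by
    calc (matP (eigSet A).toList A).rank + ∑ μ ∈ eigSet A, geomMult A μ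
        ≤ (matP (eigSet A).toList A).rank
            + Module.finrank ℂ (LinearMap.ker (matP (eigSet A).toList A).mulVecLin) :=
          Nat.add_le_add_left h1 _
      _ = n := hrn
      _ = ∑ μ ∈ eigSet A, algMult A μ := h2.symm
      _ ≤ defect A + ∑ μ ∈ eigSet A, geomMult A μ := h3
  exact Nat.le_of_add_le_add_right h4

/-- Any eigenvalue has an eigenvector. -/
lemma exists_eigenvector (T : Matrix (Fin n) (Fin n) ℂ) {lam : ℂ} (h : lam ∈ eigSet T) :
    ∃ v : Fin n → ℂ, v ≠ 0 ∧ T.mulVec v = lam • v := by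
  classical
  have hne : T.charpoly ≠ 0 := T.charpoly_monic.ne_zero
  have hroot : T.charpoly.IsRoot lam := by
    have := Multiset.mem_toFinset.1 h
    exact (Polynomial.mem_roots hne).1 this
  have hdet : (lam • (1 : Matrix (Fin n) (Fin n) ℂ) - T).det = 0 := by
    have : T.charpoly.eval lam = (lam • (1 : Matrix (Fin n) (Fin n) ℂ) - T).det := by
      rw [Matrix.charpoly, ← Polynomial.coe_evalRingHom, RingHom.map_det]
      congr 1
      ext i j
      by_cases hij : i = j <;>
        simp [hij, Matrix.charmatrix_apply, RingHom.mapMatrix_apply, Matrix.one_apply,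
          Matrix.smul_apply, Matrix.sub_apply, Matrix.diagonal_apply]
    rw [← this]
    exact hroot
  obtain ⟨v, hv0, hv⟩ := (Matrix.exists_mulVec_eq_zero_iff).2 hdet
  refine ⟨v, hv0, ?_⟩
  rw [Matrix.sub_mulVec, Matrix.smul_mulVec, Matrix.one_mulVec, sub_eq_zero] at hv
  exact hv.symm

/-- The number of eigenvalues of `T` outside `s` is at most the rank of `∏_{μ∈s}(T - μI)`. -/
lemma card_sdiff_le_rank (T : Matrix (Fin n) (Fin n) ℂ) (s : Finset ℂ) :
    (eigSet T \ s).card ≤ (matP s.toList T).rank := by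
  classical
  set N := matP s.toList T with hN
  have hev : ∀ lam ∈ eigSet T \ s, ∃ v : Fin n → ℂ, v ≠ 0 ∧ T.mulVec v = lam • v := by
    intro lam hlam
    exact exists_eigenvector T (Finset.mem_sdiff.1 hlam).1
  choose! v hv0 hveq using hev
  set S : Set ℂ := ↑(eigSet T \ s) with hS
  have hmemS : ∀ lam : S, (lam : ℂ) ∈ eigSet T \ s := fun lam => lam.2
  -- the transformed vectors
  set w : S → (Fin n → ℂ) := fun lam => N.mulVec (v lam) with hw
  have hwc : ∀ lam : S, w lam = ((s.toList.map (fun μ => (lam : ℂ) - μ)).prod) • v lam :=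
    fun lam => matP_mulVec_eig s.toList T (hveq _ (hmemS lam))
  have hc0 : ∀ lam : S, (s.toList.map (fun μ => (lam : ℂ) - μ)).prod ≠ 0 := by
    intro lam
    refine List.prod_ne_zero ?_
    intro h0
    obtain ⟨μ, hμ, hμ0⟩ := List.mem_map.1 h0
    have : (lam : ℂ) = μ := sub_eq_zero.1 hμ0
    exact (Finset.mem_sdiff.1 (hmemS lam)).2 (this ▸ (Finset.mem_toList.1 hμ))
  have hw0 : ∀ lam : S, w lam ≠ 0 := by
    intro lam
    rw [hwc lam]
    exact smul_ne_zero (hc0 lam) (hv0 _ (hmemS lam))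
  have hweig : ∀ lam : S, T.mulVec (w lam) = (lam : ℂ) • w lam := by
    intro lam
    rw [hwc lam, Matrix.mulVec_smul, hveq _ (hmemS lam), smul_comm]
  have heigvec : ∀ lam : S, Module.End.HasEigenvector T.mulVecLin (lam : ℂ) (w lam) := by
    intro lam
    refine ⟨Module.End.mem_eigenspace_iff.2 ?_, hw0 lam⟩
    rw [Matrix.mulVecLin_apply]
    exact hweig lam
  have hLI : LinearIndependent ℂ w :=
    Module.End.eigenvectors_linearIndependent T.mulVecLin S w heigvec
  -- vectors live in the range of N
  have hmem : ∀ lam : S, w lam ∈ LinearMap.range N.mulVecLin := by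
    intro lam
    exact ⟨v lam, by rw [Matrix.mulVecLin_apply]⟩
  set w' : S → ↥(LinearMap.range N.mulVecLin) := fun lam => ⟨w lam, hmem lam⟩ with hw'
  have hLI' : LinearIndependent ℂ w' := by
    apply LinearIndependent.of_comp (LinearMap.range N.mulVecLin).subtype
    exact hLI
  have hcard := hLI'.fintype_card_le_finrank
  rw [Matrix.rank]
  calc (eigSet T \ s).card = Fintype.card S := by
        simp [hS, Finset.sdiff_eq_filter]
    _ ≤ Module.finrank ℂ (LinearMap.range N.mulVecLin) := hcard

end Aux

/-- If `C = A + B`, then `|Λ(C)| ≤ (rank B + 1) · |Λ(A)| + d(A)`. -/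
theorem distinct_eigenvalues_after_perturbation {n : ℕ}
    (A B C : Matrix (Fin n) (Fin n) ℂ) (hC : C = A + B) :
    (eigSet C).card ≤ (B.rank + 1) * (eigSet A).card + defect A := by
  classical
  subst hC
  set s := eigSet A with hs
  have hsplit := Finset.card_inter_add_card_sdiff (eigSet (A + B)) s
  have h1 : (eigSet (A + B) ∩ s).card ≤ s.card :=
    Finset.card_le_card Finset.inter_subset_right
  have h2 := card_sdiff_le_rank (A + B) s
  have h3 : (matP s.toList (A + B)).rank
      ≤ (matP s.toList A).rank + (matP s.toList (A + B) - matP s.toList A).rank := by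
    have h := matrank_add_le (matP s.toList A) (matP s.toList (A + B) - matP s.toList A)
    simpa using h
  have h4 := rank_matP_sub s.toList A B
  have h5 := rank_matP_le_defect A
  have hlen : s.toList.length = s.card := Finset.length_toList s
  have hrank : (matP s.toList (A + B)).rank ≤ defect A + s.card * B.rank := by
    calc (matP s.toList (A + B)).rank
        ≤ (matP s.toList A).rank + (matP s.toList (A + B) - matP s.toList A).rank := h3
      _ ≤ defect A + s.toList.length * B.rank := Nat.add_le_add h5 h4
      _ = defect A + s.card * B.rank := by rw [hlen]
  calc (eigSet (A + B)).card
      = (eigSet (A + B) ∩ s).card + (eigSet (A + B) \ s).card := hsplit.symm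
    _ ≤ s.card + (defect A + s.card * B.rank) :=
        Nat.add_le_add h1 (h2.trans hrank)
    _ = (B.rank + 1) * s.card + defect A := by ring
end

section
/- Let A be a diagonalizable n×n complex matrix and let B be an n×n complex matrix of rank one. If C = A + B, then the number of distinct eigenvalues of C satisfies |Λ(C)| ≤ 2·|Λ(A)|. -/
open Matrix Polynomial Module

lemma det_updateRow_sum'' {R : Type*} [CommRing R] {n : Type*} [Fintype n] [DecidableEq n]
    {κ : Type*} [DecidableEq κ] (M : Matrix n n R) (i : n) (s : Finset κ) (c : κ → R)
    (v : κ → n → R) :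
    det (updateRow M i (∑ k ∈ s, c k • v k)) = ∑ k ∈ s, c k * det (updateRow M i (v k)) := by
  induction s using Finset.induction_on with
  | empty =>
      simp only [Finset.sum_empty]
      have : (0 : n → R) = (0 : R) • (0 : n → R) := by simp
      rw [this, det_updateRow_smul, zero_mul]
  | insert _ _ hk ih =>
      rw [Finset.sum_insert hk, det_updateRow_add, det_updateRow_smul, ih, Finset.sum_insert hk]

lemma det_updateRow_diagonal {R : Type*} [CommRing R] {n : Type*} [Fintype n] [DecidableEq n]
    (w : n → R) (i : n) (b : n → R) :
    det (updateRow (diagonal w) i b) = b i * ∏ j ∈ Finset.univ.erase i, w j := by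
  have hb : b = ∑ k, b k • (Pi.single k 1 : n → R) := by
    ext j; simp [Pi.single_apply]
  conv_lhs => rw [hb]
  rw [det_updateRow_sum'']
  rw [Finset.sum_eq_single i]
  · congr 1
    have : updateRow (diagonal w) i (Pi.single i 1) = diagonal (Function.update w i 1) := by
      ext j k
      rcases eq_or_ne j i with rfl | hj
      · simp [Pi.single_apply, diagonal_apply, Function.update_apply, eq_comm]
      · simp only [updateRow_ne hj, diagonal_apply, Function.update_apply]
        split_ifs with h1 h2 <;> simp_all
    rw [this, det_diagonal, Finset.prod_update_of_mem (Finset.mem_univ i), one_mul]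
    congr 1
    ext j; simp [Finset.mem_erase, Finset.mem_sdiff, and_comm]
  · intro k _ hki
    have : det (updateRow (diagonal w) i (Pi.single k 1)) = 0 := by
      apply det_eq_zero_of_column_eq_zero i
      intro j
      rcases eq_or_ne j i with rfl | hj
      · simp [Pi.single_apply, hki]
      · simp [updateRow_ne hj, diagonal_apply_ne _ hj]
    rw [this, mul_zero]
  · simp



lemma det_diagonal_sub_vecMulVec {R : Type*} [CommRing R] {n : Type*} [Fintype n] [DecidableEq n]
    (w a b : n → R) :
    (Matrix.diagonal w - Matrix.vecMulVec a b).det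
      = ∏ i, w i - ∑ i, a i * b i * ∏ j ∈ Finset.univ.erase i, w j := by
  classical
  set m : n → n → R := fun i => (-(a i)) • b with hm
  set m' : n → n → R := fun i => (diagonal w) i with hm'
  have hM : (Matrix.diagonal w - Matrix.vecMulVec a b) = Matrix.of (m + m') := by
    ext i j
    simp [m, m', vecMulVec_apply, sub_eq_neg_add]
  rw [hM]
  have hdet : (Matrix.of (m + m')).det =
      ∑ s : Finset n, Matrix.detRowAlternating (s.piecewise m m') :=
    (Matrix.detRowAlternating : (n → R) [⋀^n]→ₗ[R] R).toMultilinearMap.map_add_univ m m'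
  rw [hdet]
  have hzero : ∀ s : Finset n, 1 < s.card → Matrix.detRowAlternating (s.piecewise m m') = 0 := by
    intro s hs
    obtain ⟨i, hi, i', hi', hne⟩ := Finset.one_lt_card.mp hs
    set N : Matrix n n R := Matrix.of (s.piecewise m m') with hN
    show N.det = 0
    have hNi : N i = (-(a i)) • b := by
      show s.piecewise m m' i = _
      rw [Finset.piecewise_eq_of_mem _ _ _ hi]
    have hNi' : N i' = (-(a i')) • b := by
      show s.piecewise m m' i' = _
      rw [Finset.piecewise_eq_of_mem _ _ _ hi']
    set N2 := N.updateRow i b with hN2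
    have hrow : N2 i' = (-(a i')) • b := by
      rw [hN2, updateRow_ne (Ne.symm hne)]; exact hNi'
    calc N.det = (N.updateRow i (N i)).det := by rw [updateRow_eq_self]
      _ = (N.updateRow i ((-(a i)) • b)).det := by rw [hNi]
      _ = (-(a i)) * N2.det := by rw [det_updateRow_smul]
      _ = (-(a i)) * (N2.updateRow i' (N2 i')).det := by rw [updateRow_eq_self]
      _ = (-(a i)) * (N2.updateRow i' ((-(a i')) • b)).det := by rw [hrow]
      _ = (-(a i)) * ((-(a i')) * (N2.updateRow i' b).det) := by rw [det_updateRow_smul]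
      _ = 0 := by
          have : (N2.updateRow i' b).det = 0 := by
            apply det_zero_of_row_eq hne
            rw [updateRow_ne hne, updateRow_self, hN2, updateRow_self]
          rw [this, mul_zero, mul_zero]
  have hempty : Matrix.detRowAlternating ((∅ : Finset n).piecewise m m') = ∏ i, w i := by
    have h1 : (∅ : Finset n).piecewise m m' = diagonal w := by
      funext i; exact Finset.piecewise_eq_of_notMem _ _ _ (Finset.notMem_empty i)
    show Matrix.det _ = _
    rw [h1]
    exact det_diagonal
  have hsingle : ∀ i : n, Matrix.detRowAlternating (({i} : Finset n).piecewise m m')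
      = -(a i * b i * ∏ j ∈ Finset.univ.erase i, w j) := by
    intro i
    have h1 : ({i} : Finset n).piecewise m m' = (diagonal w).updateRow i ((-(a i)) • b) := by
      funext j
      rcases eq_or_ne j i with rfl | hj
      · rw [Finset.piecewise_eq_of_mem _ _ _ (Finset.mem_singleton_self j), updateRow_self]
      · rw [Finset.piecewise_eq_of_notMem _ _ _ (by simp [hj]), updateRow_ne hj]
    show Matrix.det _ = _
    rw [h1, det_updateRow_smul, det_updateRow_diagonal]
    ring
  set S1 : Finset (Finset n) := insert ∅ (Finset.univ.image fun i : n => ({i} : Finset n))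
    with hS1
  rw [← Finset.sum_subset (Finset.subset_univ S1) (by
    intro s _ hs
    apply hzero
    by_contra hle
    push_neg at hle
    apply hs
    interval_cases hcard : s.card
    · rw [Finset.card_eq_zero] at hcard
      rw [hS1, hcard]; exact Finset.mem_insert_self _ _
    · obtain ⟨i, rfl⟩ := Finset.card_eq_one.mp hcard
      rw [hS1]
      exact Finset.mem_insert_of_mem (Finset.mem_image_of_mem _ (Finset.mem_univ i)))]
  rw [hS1, Finset.sum_insert (by simp)]
  rw [Finset.sum_image (by intro x _ y _ h; exact Finset.singleton_injective h)]
  rw [hempty]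
  simp_rw [hsingle]
  rw [Finset.sum_neg_distrib, sub_eq_add_neg]




lemma charmatrix_diagonal_add_vecMulVec {n : ℕ} (d a b : Fin n → ℂ) :
    charmatrix (diagonal d + vecMulVec a b)
      = diagonal (fun i => (X : ℂ[X]) - C (d i)) - vecMulVec (fun i => C (a i)) (fun j => C (b j)) := by
  ext i j : 2
  rcases eq_or_ne i j with rfl | hij
  · simp [charmatrix_apply_eq, diagonal_apply_eq, vecMulVec_apply, C_add, C_mul, sub_sub]
  · simp [charmatrix_apply_ne _ _ _ hij, diagonal_apply_ne _ hij, vecMulVec_apply, hij]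

lemma charmatrix_diagonal {n : ℕ} (d : Fin n → ℂ) :
    charmatrix (diagonal d) = diagonal (fun i => (X : ℂ[X]) - C (d i)) := by
  ext i j : 2
  rcases eq_or_ne i j with rfl | hij
  · simp [charmatrix_apply_eq, diagonal_apply_eq]
  · simp [charmatrix_apply_ne _ _ _ hij, diagonal_apply_ne _ hij]

lemma charpoly_diagonal {n : ℕ} (d : Fin n → ℂ) :
    (diagonal d).charpoly = ((Finset.univ.val.map d).map fun r => X - C r).prod := by
  rw [Matrix.charpoly, charmatrix_diagonal, det_diagonal, Multiset.map_map, Finset.prod]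
  rfl

lemma key_lemma {n : ℕ} (d a b : Fin n → ℂ) :
    (eigSet (diagonal d + vecMulVec a b)).card ≤ 2 * (eigSet (diagonal d)).card := by
  classical
  set μ : Multiset ℂ := Finset.univ.val.map d with hμ
  set g : ℂ[X] := ((μ - μ.toFinset.val).map fun r => X - C r).prod with hgdef
  set k := μ.toFinset.card with hk
  have hval : μ.toFinset.val = μ.dedup := rfl
  have hcardμ : Multiset.card μ = n := by simp [hμ]
  have hchard : (diagonal d).charpoly = (μ.map fun r => X - C r).prod := charpoly_diagonal d
  have heigd : eigSet (diagonal d) = μ.toFinset := by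
    rw [eigSet, hchard, roots_multiset_prod_X_sub_C]
  have hform : (diagonal d + vecMulVec a b).charpoly
      = ∏ i, ((X : ℂ[X]) - C (d i))
        - ∑ i, C (a i) * C (b i) * ∏ j ∈ Finset.univ.erase i, ((X : ℂ[X]) - C (d j)) := by
    rw [Matrix.charpoly, charmatrix_diagonal_add_vecMulVec, det_diagonal_sub_vecMulVec]
  have hdvd_of_le : ∀ ν : Multiset ℂ, μ - μ.toFinset.val ≤ ν →
      g ∣ (ν.map fun r => X - C r).prod := fun ν h =>
    Multiset.prod_dvd_prod_of_le (Multiset.map_le_map h)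
  have hsub_le : μ - μ.toFinset.val ≤ μ := Multiset.sub_le_self _ _
  have hsub_le_erase : ∀ c : ℂ, μ - μ.toFinset.val ≤ μ.erase c := by
    intro c
    rw [Multiset.le_iff_count]
    intro x
    rw [Multiset.count_sub, hval, Multiset.count_dedup]
    by_cases hx : x ∈ μ
    · have h6 : 1 ≤ μ.count x := Multiset.one_le_count_iff_mem.mpr hx
      rcases eq_or_ne x c with rfl | hxc
      · rw [Multiset.count_erase_self]
        split_ifs <;> omega
      · rw [Multiset.count_erase_of_ne hxc]
        split_ifs <;> omega
    · have h6 : μ.count x = 0 := Multiset.count_eq_zero_of_notMem hx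
      rcases eq_or_ne x c with rfl | hxc
      · rw [Multiset.count_erase_self]
        split_ifs <;> omega
      · rw [Multiset.count_erase_of_ne hxc]
        split_ifs <;> omega
  have hprod_eq : ∏ i, ((X : ℂ[X]) - C (d i)) = (μ.map fun r => X - C r).prod := by
    rw [hμ, Multiset.map_map, Finset.prod]; rfl
  have herase_eq : ∀ i : Fin n, ∏ j ∈ Finset.univ.erase i, ((X : ℂ[X]) - C (d j))
      = ((μ.erase (d i)).map fun r => X - C r).prod := by
    intro i
    have h2 : (Finset.univ.erase i).val.map d = μ.erase (d i) := by
      have h3 : (Finset.univ.val : Multiset (Fin n)) = i ::ₘ (Finset.univ.erase i).val := by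
        rw [Finset.erase_val]
        exact (Multiset.cons_erase (Finset.mem_val.mpr (Finset.mem_univ i))).symm
      rw [hμ, h3, Multiset.map_cons, Multiset.erase_cons_head]
    rw [Finset.prod, ← h2, Multiset.map_map]
    rfl
  have hgdvd : g ∣ (diagonal d + vecMulVec a b).charpoly := by
    rw [hform]
    apply dvd_sub
    · rw [hprod_eq]; exact hdvd_of_le _ hsub_le
    · apply Finset.dvd_sum
      intro i _
      rw [herase_eq i]
      exact Dvd.dvd.mul_left (hdvd_of_le _ (hsub_le_erase (d i))) _
  have hgmonic : g.Monic := by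
    apply monic_multiset_prod_of_monic
    intro r _
    exact monic_X_sub_C r
  have hcm : (diagonal d + vecMulVec a b).charpoly.Monic := Matrix.charpoly_monic _
  obtain ⟨h, hh⟩ := hgdvd
  have hcne : (diagonal d + vecMulVec a b).charpoly ≠ 0 := hcm.ne_zero
  have hhne : h ≠ 0 := by rintro rfl; rw [mul_zero] at hh; exact hcne hh
  have hkn : k ≤ n := by
    have h4 := Multiset.card_le_card (Multiset.dedup_le μ)
    rw [hcardμ] at h4
    exact le_trans (le_of_eq (by rw [hk, Finset.card_def, hval])) h4
  have hdegg : g.natDegree = n - k := by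
    rw [hgdef, natDegree_multiset_prod_X_sub_C_eq_card, hval,
      Multiset.card_sub (Multiset.dedup_le μ), hcardμ]
    rfl
  have hdegc : (diagonal d + vecMulVec a b).charpoly.natDegree = n := by
    simp [Matrix.charpoly_natDegree_eq_dim]
  have hdegh : h.natDegree = k := by
    have h5 := hdegc
    rw [hh, natDegree_mul hgmonic.ne_zero hhne, hdegg] at h5
    omega
  rw [heigd, ← hk, eigSet, hh, roots_mul (hh ▸ hcne), Multiset.toFinset_add]
  refine le_trans (Finset.card_union_le _ _) ?_
  have c1 : (g.roots.toFinset).card ≤ k := by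
    rw [hgdef, roots_multiset_prod_X_sub_C]
    apply Finset.card_le_card
    intro x hx
    exact Multiset.mem_toFinset.mpr (Multiset.mem_of_le hsub_le (Multiset.mem_toFinset.mp hx))
  have c2 : (h.roots.toFinset).card ≤ k := by
    refine le_trans (Multiset.toFinset_card_le _) (le_trans (card_roots' h) ?_)
    rw [hdegh]
  omega

lemma rank_one_decomp {n : ℕ} (B : Matrix (Fin n) (Fin n) ℂ) (hB : B.rank = 1) :
    ∃ u v : Fin n → ℂ, B = vecMulVec u v := by
  rw [Matrix.rank] at hB
  obtain ⟨⟨u, hu⟩, _, hspan⟩ := finrank_eq_one_iff'.mp hB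
  choose c hc using fun j : Fin n =>
    hspan ⟨B.mulVecLin (Pi.single j 1), LinearMap.mem_range_self _ _⟩
  refine ⟨u, c, ?_⟩
  ext i j
  have h1 := congrArg (fun z : (LinearMap.range B.mulVecLin) => (z : Fin n → ℂ) i) (hc j)
  simp only [SetLike.val_smul, Pi.smul_apply, smul_eq_mul] at h1
  have h2 : (B.mulVecLin (Pi.single j 1)) i = B i j := by
    simp [mulVecLin_apply, mulVec_single]
  rw [h2] at h1
  rw [vecMulVec_apply, ← h1]
  ring

lemma charpoly_conj {n : ℕ} (P M : Matrix (Fin n) (Fin n) ℂ) (hP : IsUnit P.det) :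
    (P * M * P⁻¹).charpoly = M.charpoly := by
  have hmap : ∀ (N N' : Matrix (Fin n) (Fin n) ℂ),
      (N * N').map (C : ℂ →+* ℂ[X]) = N.map C * N'.map C := fun N N' =>
    Matrix.map_mul
  have h1 : P.map (C : ℂ →+* ℂ[X]) * P⁻¹.map C = 1 := by
    rw [← hmap, mul_nonsing_inv P hP]
    simp
  have h2 : P⁻¹.map (C : ℂ →+* ℂ[X]) * P.map C = 1 := by
    rw [← hmap, nonsing_inv_mul P hP]
    simp
  have key : charmatrix (P * M * P⁻¹) = P.map C * charmatrix M * P⁻¹.map C := by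
    unfold charmatrix
    rw [Matrix.mul_sub, Matrix.sub_mul]
    congr 1
    · -- P.map C * scalar X * P⁻¹.map C = scalar X
      have hc := (scalar_commute (X : ℂ[X]) (Commute.all X) (P.map (C : ℂ →+* ℂ[X]))).eq
      rw [← hc, Matrix.mul_assoc, h1, Matrix.mul_one]
    · simp only [RingHom.mapMatrix_apply]
      rw [hmap, hmap]
  rw [Matrix.charpoly, key, det_mul, det_mul, Matrix.charpoly]
  have h3 : (P.map (C : ℂ →+* ℂ[X])).det * (P⁻¹.map C).det = 1 := by
    rw [← det_mul, h1, det_one]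
  calc (P.map (C : ℂ →+* ℂ[X])).det * (charmatrix M).det * (P⁻¹.map C).det
      = (charmatrix M).det * ((P.map C).det * (P⁻¹.map C).det) := by ring
    _ = (charmatrix M).det := by rw [h3, mul_one]

lemma conj_vecMulVec {n : ℕ} (P : Matrix (Fin n) (Fin n) ℂ) (u v : Fin n → ℂ) :
    P⁻¹ * vecMulVec u v * P = vecMulVec (P⁻¹ *ᵥ u) (v ᵥ* P) := by
  ext i j
  simp only [Matrix.mul_apply, vecMulVec_apply, mulVec, vecMul, dotProduct]
  rw [Finset.sum_mul_sum]
  rw [Finset.sum_comm]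
  apply Finset.sum_congr rfl
  intro l _
  rw [Finset.sum_mul]
  apply Finset.sum_congr rfl
  intro k _
  ring


/-- a rank one update of a diagonalizable matrix at most doubles the
number of distinct eigenvalues. -/
theorem distinct_eigenvalues_rank_one_update_diagonalizable {n : ℕ}
    (A B C : Matrix (Fin n) (Fin n) ℂ) (hA : IsDiagonalizable A)
    (hB : B.rank = 1) (hC : C = A + B) :
    (eigSet C).card ≤ 2 * (eigSet A).card := by
  obtain ⟨P, D, hP, hD, hAeq⟩ := hA
  obtain ⟨u, v, hBeq⟩ := rank_one_decomp B hB
  have hPdet : IsUnit P.det := (isUnit_iff_isUnit_det P).mp hP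
  have hPP : P * P⁻¹ = 1 := mul_nonsing_inv P hPdet
  set d : Fin n → ℂ := fun i => D i i with hd
  have hDdiag : D = diagonal d := by
    ext i j
    rcases eq_or_ne i j with rfl | hij
    · simp [diagonal_apply_eq, hd]
    · rw [diagonal_apply_ne _ hij]
      exact hD hij
  have hconj : C = P * (diagonal d + vecMulVec (P⁻¹ *ᵥ u) (v ᵥ* P)) * P⁻¹ := by
    rw [← conj_vecMulVec, hC, hAeq, hBeq, ← hDdiag]
    rw [Matrix.mul_add, Matrix.add_mul]
    congr 1
    symm
    calc P * (P⁻¹ * vecMulVec u v * P) * P⁻¹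
        = ((P * P⁻¹) * vecMulVec u v) * (P * P⁻¹) := by
          simp only [Matrix.mul_assoc]
      _ = vecMulVec u v := by rw [hPP, Matrix.one_mul, Matrix.mul_one]
  have e1 : eigSet C = eigSet (diagonal d + vecMulVec (P⁻¹ *ᵥ u) (v ᵥ* P)) := by
    rw [eigSet, eigSet, hconj, charpoly_conj _ _ hPdet]
  have e2 : eigSet A = eigSet (diagonal d) := by
    rw [eigSet, eigSet, hAeq, hDdiag, charpoly_conj _ _ hPdet]
  rw [e1, e2]
  exact key_lemma _ _ _
end

section
/- Let A, B be n×n complex matrices and let C = A + B. Then the sum of the algebraic multiplicities, as eigenvalues of C, over the distinct eigenvalues of A satisfies ∑_{λ ∈ Λ(A)} m_a(C, λ) ≥ n − rank(B)·|Λ(A)| − d(A), where m_a(C, λ) is taken to be 0 when λ is not an eigenvalue of C. -/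
open Matrix Polynomial Module

/-- Charpoly of the restriction of an endomorphism to an invariant subspace divides charpoly. -/
lemma charpoly_restrict_dvd {V : Type*} [AddCommGroup V] [Module ℂ V] [FiniteDimensional ℂ V]
    (f : Module.End ℂ V) (p : Submodule ℂ V) (h : ∀ x ∈ p, f x ∈ p) :
    (LinearMap.restrict f h).charpoly ∣ f.charpoly := by
  obtain ⟨q, hq⟩ := Submodule.exists_isCompl p
  let e := Submodule.prodEquivOfIsCompl p q hq
  have hconj : (e.symm.conj f).charpoly = f.charpoly := LinearEquiv.charpoly_conj _ _
  rw [← hconj]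
  let b₁ := Module.finBasis ℂ p
  let b₂ := Module.finBasis ℂ q
  let b := b₁.prod b₂
  set Mf := LinearMap.toMatrix b b (e.symm.conj f) with hMf
  have key : ∀ j, (e.symm.conj f) (b (Sum.inl j)) = ((LinearMap.restrict f h) (b₁ j), 0) := by
    intro j
    have hb : e (b (Sum.inl j)) = (b₁ j : V) := by
      simp only [e, Submodule.coe_prodEquivOfIsCompl']
      have h1 : (b (Sum.inl j)).1 = b₁ j := Basis.prod_apply_inl_fst b₁ b₂ j
      have h2 : (b (Sum.inl j)).2 = 0 := Basis.prod_apply_inl_snd b₁ b₂ j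
      rw [h1, h2]; simp
    have hf : f ((b₁ j : V)) = ((LinearMap.restrict f h) (b₁ j) : V) :=
      (LinearMap.restrict_coe_apply f h (b₁ j)).symm
    rw [LinearEquiv.conj_apply]
    simp only [LinearMap.comp_apply, LinearEquiv.coe_coe, LinearEquiv.symm_symm]
    rw [hb, LinearEquiv.symm_apply_eq]
    simp [e, Submodule.coe_prodEquivOfIsCompl']
  have h21 : Mf.toBlocks₂₁ = 0 := by
    ext i j
    simp only [Matrix.toBlocks₂₁, Matrix.zero_apply, Matrix.of_apply, hMf,
      LinearMap.toMatrix_apply, key]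
    simp [b, Basis.prod_repr_inr]
  have h11 : Mf.toBlocks₁₁ = LinearMap.toMatrix b₁ b₁ (LinearMap.restrict f h) := by
    ext i j
    simp only [Matrix.toBlocks₁₁, Matrix.of_apply, hMf, LinearMap.toMatrix_apply, key]
    simp [b, Basis.prod_repr_inl]
  have : Mf.charpoly = (LinearMap.toMatrix b₁ b₁ (LinearMap.restrict f h)).charpoly
      * Mf.toBlocks₂₂.charpoly := by
    conv_lhs => rw [← Matrix.fromBlocks_toBlocks Mf, h21, h11]
    apply Matrix.charpoly_fromBlocks_zero₂₁
  rw [← LinearMap.charpoly_toMatrix (e.symm.conj f) b, ← LinearMap.charpoly_toMatrix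
    (LinearMap.restrict f h) b₁]
  exact ⟨Mf.toBlocks₂₂.charpoly, this⟩

lemma charpoly_mulVecLin {n : ℕ} (M : Matrix (Fin n) (Fin n) ℂ) :
    LinearMap.charpoly M.mulVecLin = M.charpoly := by
  have h : LinearMap.toMatrix (Pi.basisFun ℂ (Fin n)) (Pi.basisFun ℂ (Fin n)) M.mulVecLin = M := by
    rw [LinearMap.toMatrix_eq_toMatrix', ← Matrix.toLin'_apply']
    exact LinearMap.toMatrix'_toLin' M
  rw [← LinearMap.charpoly_toMatrix M.mulVecLin (Pi.basisFun ℂ (Fin n)), h]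

lemma geom_le_alg {n : ℕ} (M : Matrix (Fin n) (Fin n) ℂ) (μ : ℂ) :
    geomMult M μ ≤ algMult M μ := by
  set p := LinearMap.ker (M - μ • (1 : Matrix (Fin n) (Fin n) ℂ)).mulVecLin with hp
  have hmem : ∀ x ∈ p, M.mulVecLin x = μ • x := by
    intro x hx
    have h0 : (M - μ • 1).mulVecLin x = 0 := hx
    have : M.mulVecLin x - μ • x = 0 := by
      simpa [Matrix.mulVecLin_apply, Matrix.sub_mulVec, Matrix.smul_mulVec,
        Matrix.one_mulVec] using h0
    linear_combination (norm := module) this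
  have hinv : ∀ x ∈ p, M.mulVecLin x ∈ p := by
    intro x hx
    rw [hmem x hx]
    exact Submodule.smul_mem p μ hx
  have hres : LinearMap.restrict M.mulVecLin hinv = μ • LinearMap.id := by
    ext x
    simp only [LinearMap.restrict_coe_apply, LinearMap.smul_apply, LinearMap.id_apply]
    rw [hmem x x.2]
    rfl
  have hch : LinearMap.charpoly (μ • (LinearMap.id : p →ₗ[ℂ] p)) =
      (X - C μ) ^ (finrank ℂ p) := by
    set b := Module.finBasis ℂ p
    have hmat : LinearMap.toMatrix b b (μ • (LinearMap.id : p →ₗ[ℂ] p)) =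
        Matrix.diagonal (fun _ => μ) := by
      rw [LinearEquiv.map_smul, LinearMap.toMatrix_id]
      ext i j
      by_cases hij : i = j <;> simp [Matrix.diagonal_apply, Matrix.one_apply, hij]
    rw [← LinearMap.charpoly_toMatrix _ b, hmat,
      Matrix.charpoly_of_upperTriangular _ (Matrix.blockTriangular_diagonal _)]
    simp
  have hdvd := charpoly_restrict_dvd M.mulVecLin p hinv
  rw [hres, hch, _root_.charpoly_mulVecLin] at hdvd
  have h0 : M.charpoly ≠ 0 := (Matrix.charpoly_monic M).ne_zero
  exact (Polynomial.le_rootMultiplicity_iff h0).mpr hdvd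

lemma sum_algMult_eq {n : ℕ} (M : Matrix (Fin n) (Fin n) ℂ) :
    ∑ μ ∈ eigSet M, algMult M μ = n := by
  have hsplit : M.charpoly.Splits := IsAlgClosed.splits _
  have hcard : M.charpoly.roots.card = n := by
    rw [(Polynomial.splits_iff_card_roots).mp hsplit, Matrix.charpoly_natDegree_eq_dim]
    simp
  calc ∑ μ ∈ eigSet M, algMult M μ
      = ∑ μ ∈ M.charpoly.roots.toFinset, M.charpoly.roots.count μ := by
        refine Finset.sum_congr rfl fun μ _ => ?_
        rw [algMult, ← Polynomial.count_roots]
    _ = M.charpoly.roots.card := Multiset.toFinset_sum_count_eq _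
    _ = n := hcard

lemma geom_add_bound {n : ℕ} (A B : Matrix (Fin n) (Fin n) ℂ) (μ : ℂ) :
    (geomMult A μ : ℤ) - B.rank ≤ geomMult (A + B) μ := by
  set p := LinearMap.ker (A - μ • (1 : Matrix (Fin n) (Fin n) ℂ)).mulVecLin with hp
  set q := LinearMap.ker B.mulVecLin with hq
  have hle : p ⊓ q ≤ LinearMap.ker ((A + B) - μ • (1 : Matrix (Fin n) (Fin n) ℂ)).mulVecLin := by
    intro x hx
    obtain ⟨h1, h2⟩ := Submodule.mem_inf.mp hx
    have heq : (A + B) - μ • (1 : Matrix (Fin n) (Fin n) ℂ) = (A - μ • 1) + B := by abel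
    rw [LinearMap.mem_ker, heq, Matrix.mulVecLin_add, LinearMap.add_apply,
      LinearMap.mem_ker.mp h1, LinearMap.mem_ker.mp h2, add_zero]
  have h1 : finrank ℂ (p ⊓ q : Submodule ℂ (Fin n → ℂ)) ≤ geomMult (A + B) μ :=
    Submodule.finrank_mono hle
  have h2 : finrank ℂ (p ⊔ q : Submodule ℂ (Fin n → ℂ)) + finrank ℂ (p ⊓ q : Submodule ℂ (Fin n → ℂ))
      = finrank ℂ p + finrank ℂ q := Submodule.finrank_sup_add_finrank_inf_eq p q
  have h3 : finrank ℂ (p ⊔ q : Submodule ℂ (Fin n → ℂ)) ≤ n := by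
    simpa using Submodule.finrank_le (p ⊔ q)
  have h4 : B.rank + finrank ℂ q = n := by
    have := LinearMap.finrank_range_add_finrank_ker B.mulVecLin
    simpa [Matrix.rank] using this
  have h5 : geomMult A μ = finrank ℂ p := rfl
  omega

/-- `∑_{λ ∈ Λ(A)} m_a(C, λ) ≥ n - rank(B)·|Λ(A)| - d(A)`. -/
theorem sum_algMult_over_old_eigenvalues_ge {n : ℕ}
    (A B C : Matrix (Fin n) (Fin n) ℂ) (hC : C = A + B) :
    ((∑ μ ∈ eigSet A, algMult C μ : ℕ) : ℤ) ≥
      (n : ℤ) - (B.rank : ℤ) * (eigSet A).card - (defect A : ℤ) := by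
  have key : ∀ μ ∈ eigSet A,
      (algMult A μ : ℤ) - B.rank - ((algMult A μ - geomMult A μ : ℕ) : ℤ) ≤ algMult C μ := by
    intro μ _
    have h1 : (geomMult C μ : ℤ) ≤ algMult C μ := by exact_mod_cast geom_le_alg C μ
    have h2 : (geomMult A μ : ℤ) - B.rank ≤ geomMult C μ := by
      rw [hC]; exact geom_add_bound A B μ
    omega
  have hsum := Finset.sum_le_sum key
  have hsplit : ∑ μ ∈ eigSet A,
      ((algMult A μ : ℤ) - B.rank - ((algMult A μ - geomMult A μ : ℕ) : ℤ))
      = (n : ℤ) - (B.rank : ℤ) * (eigSet A).card - (defect A : ℤ) := by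
    rw [Finset.sum_sub_distrib, Finset.sum_sub_distrib, Finset.sum_const, nsmul_eq_mul]
    have e1 : ∑ μ ∈ eigSet A, (algMult A μ : ℤ) = (n : ℤ) := by
      rw [← Nat.cast_sum, sum_algMult_eq A]
    have e2 : ∑ μ ∈ eigSet A, ((algMult A μ - geomMult A μ : ℕ) : ℤ) = (defect A : ℤ) := by
      rw [defect, Nat.cast_sum]
    rw [e1, e2]
    ring
  rw [ge_iff_le, ← hsplit]
  calc ∑ μ ∈ eigSet A, ((algMult A μ : ℤ) - B.rank - ((algMult A μ - geomMult A μ : ℕ) : ℤ))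
      ≤ ∑ μ ∈ eigSet A, (algMult C μ : ℤ) := hsum
    _ = ((∑ μ ∈ eigSet A, algMult C μ : ℕ) : ℤ) := (Nat.cast_sum _ _).symm
end

section
/- Let A be a diagonalizable n×n complex matrix and let B be an n×n complex matrix of rank one, and set C = A + B. Then the degree of the minimal polynomial of C is at most twice the degree of the minimal polynomial of A. (Consequently, in exact arithmetic an optimal Krylov method solves a linear system with C in at most double the number of iterations required for A.) -/
open Matrix Polynomial Module

/-- a rank one update of a diagonalizable matrix at most doubles the degree of
the minimal polynomial (hence the number of Krylov iterations needed for exact solution). -/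

theorem key_minpoly_le {V : Type*} [AddCommGroup V] [Module ℂ V]
    [FiniteDimensional ℂ V] (f g : Module.End ℂ V) (u : V)
    (hd : 0 < (minpoly ℂ g).natDegree)
    (hb : ∀ x, ∃ c : ℂ, f x - g x = c • u) :
    (minpoly ℂ f).natDegree ≤ 2 * (minpoly ℂ g).natDegree := by
  classical
  set p := minpoly ℂ g with hp
  set d := p.natDegree with hdd
  set W : Submodule ℂ V := Submodule.span ℂ (Set.range fun i : Fin d => (g ^ (i : ℕ)) u) with hW
  have hmem : ∀ i : ℕ, i < d → (g ^ i) u ∈ W := fun i hi =>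
    Submodule.subset_span ⟨⟨i, hi⟩, rfl⟩
  have hu : u ∈ W := by simpa using hmem 0 hd
  have hpg : Polynomial.aeval g p = 0 := minpoly.aeval ℂ g
  have hsum : ∑ i ∈ Finset.range (d + 1), p.coeff i • ((g ^ i) u) = 0 := by
    have h1 : (∑ i ∈ Finset.range (d + 1), p.coeff i • (g ^ i)) u = (0 : V) := by
      rw [← Polynomial.aeval_eq_sum_range, hpg]; rfl
    simpa using h1
  have hgd : (g ^ d) u ∈ W := by
    have hmonic : p.coeff d = 1 :=
      (minpoly.monic (LinearMap.isIntegral g)).coeff_natDegree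
    rw [Finset.sum_range_succ, hmonic, one_smul] at hsum
    have h2 : (g ^ d) u = -∑ i ∈ Finset.range d, p.coeff i • ((g ^ i) u) :=
      eq_neg_of_add_eq_zero_right hsum
    rw [h2]
    exact Submodule.neg_mem _ (Submodule.sum_mem _ fun i hi =>
      Submodule.smul_mem _ _ (hmem i (Finset.mem_range.mp hi)))
  have hWg : ∀ w ∈ W, g w ∈ W := by
    have hsub : (Set.range fun i : Fin d => (g ^ (i : ℕ)) u) ⊆ (W.comap g : Set V) := by
      rintro _ ⟨i, rfl⟩
      have h3 : g ((g ^ (i : ℕ)) u) = (g ^ ((i : ℕ) + 1)) u := by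
        rw [pow_succ']; rfl
      simp only [SetLike.mem_coe, Submodule.mem_comap, h3]
      rcases Nat.lt_or_ge ((i : ℕ) + 1) d with h | h
      · exact hmem _ h
      · have h6 : (i : ℕ) + 1 = d := le_antisymm (Nat.succ_le_of_lt i.2) h
        rw [h6]; exact hgd
    intro w hw
    exact Submodule.span_le.mpr hsub hw
  have hbW : ∀ x, f x - g x ∈ W := fun x => by
    obtain ⟨c, hc⟩ := hb x; rw [hc]; exact Submodule.smul_mem _ _ hu
  have hWf : ∀ w ∈ W, f w ∈ W := fun w hw => by
    have h4 : f w = g w + (f w - g w) := by abel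
    rw [h4]; exact Submodule.add_mem _ (hWg w hw) (hbW w)
  have hpow : ∀ (k : ℕ) (x : V), (f ^ k) x - (g ^ k) x ∈ W := by
    intro k
    induction k with
    | zero => intro x; simpa using Submodule.zero_mem W
    | succ k ih =>
      intro x
      have h1 : (f ^ (k + 1)) x - (g ^ (k + 1)) x
          = f ((f ^ k) x - (g ^ k) x) + (f ((g ^ k) x) - g ((g ^ k) x)) := by
        rw [pow_succ', pow_succ']
        simp only [Module.End.mul_apply, _root_.map_sub]
        abel
      rw [h1]
      exact Submodule.add_mem _ (hWf _ (ih x)) (hbW _)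
  have hpf : ∀ x, (Polynomial.aeval f p) x ∈ W := by
    intro x
    have h1 : (Polynomial.aeval f p) x
        = ∑ i ∈ Finset.range (d + 1), p.coeff i • ((f ^ i) x - (g ^ i) x) := by
      have hf := Polynomial.aeval_eq_sum_range (S := Module.End ℂ V) (p := p) f
      have hg := Polynomial.aeval_eq_sum_range (S := Module.End ℂ V) (p := p) g
      have h2 : (Polynomial.aeval f p) x = (Polynomial.aeval f p) x - (Polynomial.aeval g p) x := by
        rw [hpg]; simp
      rw [h2, hf, hg]
      simp [smul_sub, Finset.sum_sub_distrib, ← hdd]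
    rw [h1]
    exact Submodule.sum_mem _ fun i _ => Submodule.smul_mem _ _ (hpow i x)
  have hWfr : finrank ℂ W ≤ d := by
    refine le_trans (finrank_span_le_card _) ?_
    rw [Set.toFinset_range]
    exact le_trans (Finset.card_image_le) (by simp)
  set f' := f.restrict hWf with hf'
  set q := minpoly ℂ f' with hq
  have hres : ∀ (r : ℂ[X]) (w : W), (Polynomial.aeval f r) (w : V) = ((Polynomial.aeval f' r) w : V) := by
    intro r w
    induction r using Polynomial.induction_on' with
    | add a b ha hb' => simp [_root_.map_add, LinearMap.add_apply, ha, hb']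
    | monomial m a =>
      have h7 : (LinearMap.restrict f hWf) ^ m
          = (f ^ m).restrict (Module.End.pow_apply_mem_of_forall_mem m hWf) :=
        Module.End.pow_restrict m hWf
      simp only [Polynomial.aeval_monomial, Module.End.mul_apply,
        Module.algebraMap_end_apply, hf', h7,
        LinearMap.restrict_coe_apply, Submodule.coe_smul]
  have hqp : Polynomial.aeval f (q * p) = 0 := by
    ext x
    simp only [_root_.map_mul, Module.End.mul_apply, LinearMap.zero_apply]
    have hw : (Polynomial.aeval f p) x ∈ W := hpf x
    have h5 := hres q ⟨_, hw⟩
    rw [minpoly.aeval ℂ f'] at h5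
    simpa using h5
  have hdvd : minpoly ℂ f ∣ q * p := minpoly.dvd ℂ f hqp
  have hqmonic : q.Monic := minpoly.monic (LinearMap.isIntegral f')
  have hpmonic : p.Monic := minpoly.monic (LinearMap.isIntegral g)
  have hle := Polynomial.natDegree_le_of_dvd hdvd (hqmonic.mul hpmonic).ne_zero
  rw [Polynomial.natDegree_mul hqmonic.ne_zero hpmonic.ne_zero] at hle
  have hqd : q.natDegree ≤ d := by
    calc q.natDegree ≤ f'.charpoly.natDegree :=
          Polynomial.natDegree_le_of_dvd (LinearMap.minpoly_dvd_charpoly f')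
            f'.charpoly_monic.ne_zero
      _ = finrank ℂ W := f'.charpoly_natDegree
      _ ≤ d := hWfr
  omega

/-- STATEMENT 6 aux placement -/
theorem minpoly_degree_rank_one_update {n : ℕ}
    (A B C : Matrix (Fin n) (Fin n) ℂ) (hA : IsDiagonalizable A)
    (hB : B.rank = 1) (hC : C = A + B) :
    (minpoly ℂ C).natDegree ≤ 2 * (minpoly ℂ A).natDegree := by
  have hn : n ≠ 0 := by
    rintro rfl
    have h1 := B.rank_le_card_width
    simp at h1
    omega
  haveI : Nonempty (Fin n) := ⟨⟨0, Nat.pos_of_ne_zero hn⟩⟩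
  set e := Matrix.toLinAlgEquiv' (R := ℂ) (n := Fin n) with he
  have hMC : minpoly ℂ C = minpoly ℂ (e C) := (minpoly.algEquiv_eq e C).symm
  have hMA : minpoly ℂ A = minpoly ℂ (e A) := (minpoly.algEquiv_eq e A).symm
  obtain ⟨v, hv0, hv⟩ := finrank_eq_one_iff'.mp hB
  have hd : 0 < (minpoly ℂ (e A)).natDegree :=
    minpoly.natDegree_pos (LinearMap.isIntegral (e A))
  have hb : ∀ x, ∃ c : ℂ, (e C) x - (e A) x = c • (v : Fin n → ℂ) := by
    intro x
    have h2 : (e C) x - (e A) x = B.mulVecLin x := by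
      rw [hC, _root_.map_add]
      simp [he, Matrix.toLinAlgEquiv'_apply]
    obtain ⟨c, hc⟩ := hv ⟨B.mulVecLin x, LinearMap.mem_range_self _ x⟩
    refine ⟨c, ?_⟩
    rw [h2]
    exact (congrArg Subtype.val hc).symm
  rw [hMC, hMA]
  exact key_minpoly_le (e C) (e A) v hd hb
end

section
/- Let A be a diagonalizable n×n complex matrix, let B be an n×n complex matrix of rank one, and set C = A + B. If C is also diagonalizable, then the degree of the minimal polynomial of C equals |Λ(C)| and satisfies deg(minpoly C) = |Λ(C)| ≤ 2·|Λ(A)| = 2·deg(minpoly A). -/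
open Matrix Polynomial Module

section Aux
variable {n : ℕ}

lemma charpoly_ne_zero (M : Matrix (Fin n) (Fin n) ℂ) : M.charpoly ≠ 0 :=
  M.charpoly_monic.ne_zero

lemma eval_charpoly' (M : Matrix (Fin n) (Fin n) ℂ) (μ : ℂ) :
    M.charpoly.eval μ = (μ • (1 : Matrix (Fin n) (Fin n) ℂ) - M).det := by
  rw [Matrix.charpoly]
  have : (Matrix.charmatrix M).det.eval μ
      = ((Polynomial.evalRingHom μ).mapMatrix (Matrix.charmatrix M)).det := by
    rw [← RingHom.map_det]; rfl
  rw [this]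
  congr 1
  ext i j
  by_cases h : i = j
  · subst h
    simp [Matrix.charmatrix_apply_eq, Matrix.one_apply, Matrix.smul_apply]
  · simp [Matrix.charmatrix_apply_ne _ _ _ h, Matrix.one_apply_ne h, Matrix.smul_apply, h]

lemma mem_eigSet_iff {M : Matrix (Fin n) (Fin n) ℂ} {μ : ℂ} :
    μ ∈ eigSet M ↔ Module.End.HasEigenvalue M.mulVecLin μ := by
  classical
  rw [eigSet, Multiset.mem_toFinset, mem_roots (charpoly_ne_zero M), IsRoot.def, eval_charpoly']
  have h1 : (μ • (1 : Matrix (Fin n) (Fin n) ℂ) - M) = -(M - μ • 1) := (neg_sub _ _).symm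
  have hpow : ((-1 : ℂ)) ^ (Fintype.card (Fin n)) ≠ 0 := pow_ne_zero _ (by norm_num)
  rw [h1, Matrix.det_neg, mul_eq_zero, or_iff_right hpow, ← Matrix.exists_mulVec_eq_zero_iff]
  constructor
  · rintro ⟨v, hv0, hv⟩
    apply Module.End.hasEigenvalue_of_hasEigenvector (x := v)
    refine ⟨Module.End.mem_eigenspace_iff.mpr ?_, hv0⟩
    rw [Matrix.sub_mulVec] at hv
    have h2 : M.mulVec v = (μ • (1 : Matrix (Fin n) (Fin n) ℂ)).mulVec v := sub_eq_zero.mp hv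
    simpa [Matrix.mulVecLin_apply, Matrix.smul_mulVec, Matrix.one_mulVec] using h2
  · intro h
    obtain ⟨v, hv⟩ := h.exists_hasEigenvector
    refine ⟨v, hv.2, ?_⟩
    have h2 := Module.End.mem_eigenspace_iff.mp hv.1
    rw [Matrix.mulVecLin_apply] at h2
    rw [Matrix.sub_mulVec, h2]
    simp [Matrix.smul_mulVec, Matrix.one_mulVec]

lemma matrix_isIntegral (M : Matrix (Fin n) (Fin n) ℂ) : IsIntegral ℂ M :=
  Algebra.IsIntegral.isIntegral M

lemma minpoly_ne_zero' (M : Matrix (Fin n) (Fin n) ℂ) : minpoly ℂ M ≠ 0 :=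
  minpoly.ne_zero (matrix_isIntegral M)

lemma mulVecLin_eq (M : Matrix (Fin n) (Fin n) ℂ) :
    M.mulVecLin = Matrix.toLinAlgEquiv' M := rfl

lemma mulVecLin_aeval (M : Matrix (Fin n) (Fin n) ℂ) (p : ℂ[X]) :
    (aeval M p).mulVecLin = aeval M.mulVecLin p := by
  rw [mulVecLin_eq, mulVecLin_eq]
  exact (Polynomial.aeval_algHom_apply (Matrix.toLinAlgEquiv'.toAlgHom) M p).symm

lemma eigSet_eq_minpoly_roots (M : Matrix (Fin n) (Fin n) ℂ) :
    eigSet M = (minpoly ℂ M).roots.toFinset := by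
  ext μ
  rw [mem_eigSet_iff, Multiset.mem_toFinset, mem_roots (minpoly_ne_zero' M)]
  rw [mulVecLin_eq, Module.End.hasEigenvalue_iff_isRoot,
    minpoly.algEquiv_eq Matrix.toLinAlgEquiv' M]

lemma aeval_conj (p : ℂ[X]) {P : Matrix (Fin n) (Fin n) ℂ} (hP : IsUnit P)
    (D : Matrix (Fin n) (Fin n) ℂ) :
    aeval (P * D * P⁻¹) p = P * aeval D p * P⁻¹ := by
  obtain ⟨u, rfl⟩ := hP
  rw [← Matrix.coe_units_inv u]
  induction p using Polynomial.induction_on' with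
  | add p q hp hq => rw [map_add, map_add, hp, hq, mul_add, add_mul]
  | monomial k a =>
    rw [aeval_monomial, aeval_monomial, Units.conj_pow, Algebra.algebraMap_eq_smul_one]
    simp only [smul_mul_assoc, one_mul, mul_smul_comm]

lemma aeval_diagonal (d : Fin n → ℂ) (p : ℂ[X]) :
    aeval (Matrix.diagonal d) p = Matrix.diagonal (fun i => p.eval (d i)) := by
  induction p using Polynomial.induction_on' with
  | add p q hp hq =>
    rw [map_add, hp, hq, Matrix.diagonal_add]
    simp [eval_add]
  | monomial k a =>
    rw [aeval_monomial, Matrix.algebraMap_eq_diagonal, Matrix.diagonal_pow,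
      Matrix.diagonal_mul_diagonal]
    simp [Pi.algebraMap_apply]

lemma natDegree_minpoly_eq {M : Matrix (Fin n) (Fin n) ℂ} (hM : IsDiagonalizable M) :
    (minpoly ℂ M).natDegree = (eigSet M).card := by
  classical
  obtain ⟨P, D, hP, hD, rfl⟩ := hM
  set s : Finset ℂ := Finset.image D.diag Finset.univ with hs
  have hq : aeval (P * D * P⁻¹) (∏ μ ∈ s, (X - C μ)) = 0 := by
    rw [aeval_conj _ hP]
    have hDd : aeval D (∏ μ ∈ s, (X - C μ)) = 0 := by
      conv_lhs => rw [← hD.diagonal_diag]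
      rw [aeval_diagonal]
      have hz : ∀ i : Fin n, Polynomial.eval (D.diag i) (∏ μ ∈ s, (X - C μ)) = 0 := by
        intro i
        rw [eval_prod]
        exact Finset.prod_eq_zero (Finset.mem_image_of_mem _ (Finset.mem_univ i)) (by simp)
      have hz' : ∀ i : Fin n, Polynomial.eval (D i i) (∏ μ ∈ s, (X - C μ)) = 0 := hz
      simp [hz']
    rw [hDd, mul_zero, zero_mul]
  have hprodne : (∏ μ ∈ s, (X - C μ) : ℂ[X]) ≠ 0 :=
    (monic_prod_of_monic _ _ fun μ _ => monic_X_sub_C μ).ne_zero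
  have hdvd := minpoly.dvd ℂ (P * D * P⁻¹) hq
  have hnodup : (minpoly ℂ (P * D * P⁻¹)).roots.Nodup := by
    have hle := Polynomial.roots.le_of_dvd hprodne hdvd
    rw [Polynomial.roots_prod_X_sub_C] at hle
    exact Multiset.nodup_of_le hle s.nodup
  rw [eigSet_eq_minpoly_roots, Multiset.toFinset_card_of_nodup hnodup]
  exact ((Polynomial.splits_iff_card_roots).mp (IsAlgClosed.splits _)).symm

lemma rank_add_le' (M N : Matrix (Fin n) (Fin n) ℂ) : (M + N).rank ≤ M.rank + N.rank := by
  classical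
  have hr : LinearMap.range (M + N).mulVecLin ≤
      LinearMap.range M.mulVecLin ⊔ LinearMap.range N.mulVecLin := by
    rintro x ⟨v, rfl⟩
    rw [Matrix.mulVecLin_add]
    exact Submodule.mem_sup.mpr ⟨M.mulVecLin v, ⟨v, rfl⟩, N.mulVecLin v, ⟨v, rfl⟩, rfl⟩
  have h1 : (M + N).rank ≤ Module.finrank ℂ
      (↥(LinearMap.range M.mulVecLin ⊔ LinearMap.range N.mulVecLin)) :=
    Submodule.finrank_mono hr
  have h2 := Submodule.finrank_sup_add_finrank_inf_eq
    (LinearMap.range M.mulVecLin) (LinearMap.range N.mulVecLin)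
  change _ + _ = M.rank + N.rank at h2
  omega

lemma rank_aeval_sub_le (A B : Matrix (Fin n) (Fin n) ℂ) (hB : B.rank ≤ 1) (p : ℂ[X]) :
    (aeval (A + B) p - aeval A p).rank ≤ p.natDegree := by
  suffices H : ∀ d (p : ℂ[X]), p.natDegree ≤ d →
      (aeval (A + B) p - aeval A p).rank ≤ p.natDegree from H p.natDegree p le_rfl
  intro d
  induction d with
  | zero =>
    intro p hp
    obtain ⟨a, rfl⟩ := Polynomial.natDegree_eq_zero.mp (Nat.le_zero.mp hp)
    simp
  | succ d ih =>
    intro p hp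
    rcases le_or_gt p.natDegree d with h | h
    · exact ih p h
    · have hd : p.natDegree = d + 1 := le_antisymm hp h
      set q := p.divX with hq
      have hqd' : q.natDegree = p.natDegree - 1 := by
        rw [hq]; exact Polynomial.natDegree_divX_eq_natDegree_tsub_one
      have hqd : q.natDegree ≤ d := by omega
      have key : p = q * X + C (p.coeff 0) := (p.divX_mul_X_add).symm
      have expand : aeval (A + B) p - aeval A p
          = (aeval (A + B) q - aeval A q) * (A + B) + aeval A q * B := by
        conv_lhs => rw [key]
        simp only [map_add, _root_.map_mul, aeval_X, aeval_C]
        noncomm_ring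
      rw [expand]
      calc ((aeval (A + B) q - aeval A q) * (A + B) + aeval A q * B).rank
          ≤ ((aeval (A + B) q - aeval A q) * (A + B)).rank + (aeval A q * B).rank :=
            rank_add_le' _ _
        _ ≤ (aeval (A + B) q - aeval A q).rank + B.rank :=
            add_le_add (Matrix.rank_mul_le_left _ _) (Matrix.rank_mul_le_right _ _)
        _ ≤ q.natDegree + 1 := add_le_add (ih q hqd) hB
        _ ≤ p.natDegree := by omega

lemma card_sdiff_le_rank_s9 (A C : Matrix (Fin n) (Fin n) ℂ) :
    ((eigSet C) \ (eigSet A)).card ≤ (aeval C (minpoly ℂ A)).rank := by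
  classical
  set p := minpoly ℂ A with hp
  set S := eigSet C \ eigSet A with hS
  have hev : ∀ μ : S, Module.End.HasEigenvalue C.mulVecLin (μ : ℂ) := fun μ =>
    mem_eigSet_iff.mp (Finset.mem_sdiff.mp μ.2).1
  choose v hv using fun μ : S => (hev μ).exists_hasEigenvector
  have hli : LinearIndependent ℂ v :=
    Module.End.eigenvectors_linearIndependent' C.mulVecLin
      (fun μ : S => (μ : ℂ)) Subtype.coe_injective v hv
  have hne : ∀ μ : S, p.eval (μ : ℂ) ≠ 0 := by
    intro μ hzero
    have hmem : (μ : ℂ) ∈ p.roots := (mem_roots (minpoly_ne_zero' A)).mpr hzero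
    have : (μ : ℂ) ∈ eigSet A := by
      rw [eigSet, Multiset.mem_toFinset]
      exact Multiset.mem_of_le
        (Polynomial.roots.le_of_dvd (charpoly_ne_zero A) (Matrix.minpoly_dvd_charpoly A)) hmem
    exact (Finset.mem_sdiff.mp μ.2).2 this
  set W := LinearMap.range (aeval C p).mulVecLin with hW
  have himg : ∀ μ : S, (p.eval (μ : ℂ)) • v μ ∈ W := by
    intro μ
    refine ⟨v μ, ?_⟩
    rw [mulVecLin_aeval]
    exact Module.End.aeval_apply_of_hasEigenvector (hv μ)
  have hli2 : LinearIndependent ℂ (fun μ : S => (p.eval (μ : ℂ)) • v μ) := by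
    have := hli.units_smul (fun μ : S => Units.mk0 (p.eval (μ : ℂ)) (hne μ))
    exact this
  let u : S → W := fun μ => ⟨(p.eval (μ : ℂ)) • v μ, himg μ⟩
  have hliu : LinearIndependent ℂ u := by
    apply LinearIndependent.of_comp W.subtype
    exact hli2
  have hcard := hliu.fintype_card_le_finrank
  rw [Fintype.card_coe] at hcard
  exact hcard

end Aux

/-- if `C = A + B` with `A` diagonalizable, `B` of rank one, and `C`
diagonalizable, then `deg (minpoly C) = |Λ(C)| ≤ 2·|Λ(A)| = 2·deg (minpoly A)`. -/
theorem minpoly_degree_eq_card_and_le {n : ℕ}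
    (A B C : Matrix (Fin n) (Fin n) ℂ) (hA : IsDiagonalizable A)
    (hB : B.rank = 1) (hC : C = A + B) (hCdiag : IsDiagonalizable C) :
    (minpoly ℂ C).natDegree = (eigSet C).card ∧
      (eigSet C).card ≤ 2 * (eigSet A).card ∧
      2 * (eigSet A).card = 2 * (minpoly ℂ A).natDegree := by
  have hBle : B.rank ≤ 1 := le_of_eq hB
  have hmpC := natDegree_minpoly_eq hCdiag
  have hmpA := natDegree_minpoly_eq hA
  refine ⟨hmpC, ?_, by rw [hmpA]⟩
  have h1 : ((eigSet C) \ (eigSet A)).card ≤ (eigSet A).card := by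
    calc ((eigSet C) \ (eigSet A)).card
        ≤ (aeval C (minpoly ℂ A)).rank := card_sdiff_le_rank_s9 A C
      _ ≤ (minpoly ℂ A).natDegree := by
          have h0 : aeval A (minpoly ℂ A) = 0 := minpoly.aeval ℂ A
          have h2 := rank_aeval_sub_le A B hBle (minpoly ℂ A)
          rw [← hC, h0, sub_zero] at h2
          exact h2
      _ = (eigSet A).card := hmpA
  calc (eigSet C).card
      = ((eigSet C \ eigSet A) ∪ (eigSet C ∩ eigSet A)).card := by
        rw [Finset.sdiff_union_inter]
    _ ≤ (eigSet C \ eigSet A).card + (eigSet C ∩ eigSet A).card := Finset.card_union_le _ _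
    _ ≤ (eigSet A).card + (eigSet A).card :=
        add_le_add h1 (Finset.card_le_card Finset.inter_subset_right)
    _ = 2 * (eigSet A).card := (two_mul _).symm
end
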